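/- arXiv:1408.2760 — 2 statements merged into one kernel-verified Lean document; each statement's English description precedes it below -/
import Mathlib

section
/- Let L be a complex Hilbert space, λ : L → L a bounded complex-linear operator with adjoint λ*, and Λ : L → L an anti-symmetric real-linear map. Then the real-linear map η ↦ λ(Λη) + Λ(λ*η) is anti-symmetric. Moreover, if Λ² is trace class, then (λ∘Λ + Λ∘λ*)² is trace class. -/
open scoped ComplexInnerProductSpace

/-- The absolute value `|T| = sqrt (T† T)` of a bounded operator on a complex Hilbert space. -/
noncomputable def opAbs {L : Type*} [NormedAddCommGroup L] [InnerProductSpace ℂ L]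
    [CompleteSpace L] (T : L →L[ℂ] L) : L →L[ℂ] L :=
  CFC.sqrt (ContinuousLinearMap.adjoint T * T)

/-- A bounded operator `T` is trace class if `∑ᵢ ⟨eᵢ, |T| eᵢ⟩ < ∞` for some orthonormal
(Hilbert) basis. -/
def IsTraceClassOp {L : Type*} [NormedAddCommGroup L] [InnerProductSpace ℂ L]
    [CompleteSpace L] (T : L →L[ℂ] L) : Prop :=
  ∃ (ι : Type) (e : HilbertBasis ι ℂ L),
    Summable fun i => (⟪e i, opAbs T (e i)⟫).re

/-- A map `f : L → L` is trace class if it is (the coercion of) a trace class bounded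
complex-linear operator. -/
def IsTraceClassFun {L : Type*} [NormedAddCommGroup L] [InnerProductSpace ℂ L]
    [CompleteSpace L] (f : L → L) : Prop :=
  ∃ T : L →L[ℂ] L, ⇑T = f ∧ IsTraceClassOp T

lemma cre_self {L : Type*} [NormedAddCommGroup L] [InnerProductSpace ℂ L] (x : L) :
    (⟪x, x⟫).re = ‖x‖ ^ 2 := by
  have := inner_self_eq_norm_sq (𝕜 := ℂ) (E := L) x
  simpa using this

set_option synthInstance.maxHeartbeats 1000000 in
lemma opAbs_of_neg' {L : Type*} [NormedAddCommGroup L] [InnerProductSpace ℂ L]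
    [CompleteSpace L] (T : L →L[ℂ] L) (hsa : IsSelfAdjoint T) (hpos : 0 ≤ -T) :
    opAbs T = -T := by
  unfold opAbs
  rw [← ContinuousLinearMap.star_eq_adjoint, hsa.star_eq,
    show T * T = (-T) * (-T) by rw [neg_mul_neg], CFC.sqrt_mul_self (-T) hpos]

lemma parseval' {L : Type*} [NormedAddCommGroup L] [InnerProductSpace ℂ L] [CompleteSpace L]
    {ι : Type} (e : HilbertBasis ι ℂ L) (x : L) :
    HasSum (fun i => ‖⟪e i, x⟫‖ ^ 2) (‖x‖ ^ 2) := by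
  have h := (e.hasSum_inner_mul_inner x x).mapL Complex.reCLM
  convert h using 2 with i
  · have h1 : ⟪x, e i⟫ = (starRingEnd ℂ) ⟪e i, x⟫ := (inner_conj_symm _ _).symm
    rw [h1]
    generalize ⟪e i, x⟫ = z
    simp [Complex.sq_norm, Complex.normSq_apply, Complex.mul_re]
  · rw [← @inner_self_eq_norm_sq ℂ]
    simp

lemma opAbs_re_of_antisq {L : Type*} [NormedAddCommGroup L] [InnerProductSpace ℂ L]
    [CompleteSpace L] (A : L → L) (T : L →L[ℂ] L) (hT : ∀ x, T x = A (A x))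
    (hanti : ∀ ξ τ : L, ⟪ξ, A τ⟫ = -⟪τ, A ξ⟫) :
    ∀ x : L, (⟪x, opAbs T x⟫).re = ‖A x‖ ^ 2 := by
  have key : ∀ x : L, ⟪x, T x⟫ = -⟪A x, A x⟫ := by
    intro x
    rw [hT, hanti x (A x)]
  have hself : IsSelfAdjoint T := by
    rw [ContinuousLinearMap.isSelfAdjoint_iff_isSymmetric]
    intro x y
    calc ⟪T x, y⟫ = (starRingEnd ℂ) ⟪y, T x⟫ := (inner_conj_symm _ _).symm
      _ = (starRingEnd ℂ) (-⟪A x, A y⟫) := by rw [hT, hanti y (A x)]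
      _ = -⟪A y, A x⟫ := by rw [map_neg, inner_conj_symm]
      _ = ⟪x, A (A y)⟫ := (hanti x (A y)).symm
      _ = ⟪x, T y⟫ := by rw [hT]
  have h2 : ∀ x : L, (⟪x, (-T) x⟫).re = ‖A x‖ ^ 2 := by
    intro x
    rw [ContinuousLinearMap.neg_apply, inner_neg_right, key, neg_neg, cre_self]
  have hpos : 0 ≤ -T := by
    rw [ContinuousLinearMap.nonneg_iff_isPositive]
    refine ⟨ContinuousLinearMap.isSelfAdjoint_iff_isSymmetric.mp hself.neg, fun x => ?_⟩
    have h1 : ((⟪(-T) x, x⟫).re : ℝ) = (⟪x, (-T) x⟫).re := by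
      rw [← inner_conj_symm x ((-T) x), Complex.conj_re]
    have hRC : ContinuousLinearMap.reApplyInnerSelf (-T) x = (⟪(-T) x, x⟫).re := rfl
    rw [hRC, h1, h2]
    positivity
  intro x
  rw [opAbs_of_neg' T hself hpos]
  exact h2 x

/-- If `λ` is a bounded complex-linear operator and `Λ` is anti-symmetric,
then `λ∘Λ + Λ∘λ*` is anti-symmetric; and if `Λ²` is trace class then `(λ∘Λ + Λ∘λ*)²`
is trace class. -/
theorem antisymmetric_mixed_bracket
    {L : Type*} [NormedAddCommGroup L] [InnerProductSpace ℂ L] [CompleteSpace L]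
    (l : L →L[ℂ] L) (Λ : L →ₗ[ℝ] L)
    (hΛ : ∀ ξ τ : L, ⟪ξ, Λ τ⟫ = -⟪τ, Λ ξ⟫) :
    (∀ ξ τ : L, ⟪ξ, l (Λ τ) + Λ (ContinuousLinearMap.adjoint l τ)⟫ =
        -⟪τ, l (Λ ξ) + Λ (ContinuousLinearMap.adjoint l ξ)⟫) ∧
    (IsTraceClassFun (fun η => Λ (Λ η)) →
      IsTraceClassFun (fun η =>
        l (Λ (l (Λ η) + Λ (ContinuousLinearMap.adjoint l η))) +
          Λ (ContinuousLinearMap.adjoint l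
            (l (Λ η) + Λ (ContinuousLinearMap.adjoint l η))))) := by
  set l' := ContinuousLinearMap.adjoint l with hl'
  have hA : ∀ ξ τ : L, ⟪ξ, l (Λ τ) + Λ (l' τ)⟫ = -⟪τ, l (Λ ξ) + Λ (l' ξ)⟫ := by
    intro ξ τ
    rw [inner_add_right, inner_add_right, ← ContinuousLinearMap.adjoint_inner_left l (Λ τ) ξ,
      hΛ (ContinuousLinearMap.adjoint l ξ) τ, hΛ ξ (ContinuousLinearMap.adjoint l τ),
      ContinuousLinearMap.adjoint_inner_left l (Λ ξ) τ]
    ring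
  refine ⟨hA, ?_⟩
  rintro ⟨S, hS, ι, e, hsum⟩
  have hSx : ∀ x : L, S x = Λ (Λ x) := fun x => congrFun hS x
  -- Λ is bounded
  have hb : ∀ ξ : L, ‖Λ ξ‖ ≤ Real.sqrt ‖S‖ * ‖ξ‖ := by
    intro ξ
    have q0 : ⟪ξ, S ξ⟫ = -⟪Λ ξ, Λ ξ⟫ := by rw [hSx]; exact hΛ ξ (Λ ξ)
    have q1 : ‖Λ ξ‖ ^ 2 = -(⟪ξ, S ξ⟫).re := by rw [q0]; simp [cre_self]; rw [← Complex.ofReal_pow, Complex.ofReal_re]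
    have q2 : |(⟪ξ, S ξ⟫).re| ≤ ‖⟪ξ, S ξ⟫‖ := by
      exact Complex.abs_re_le_norm _
    have h2 : ‖Λ ξ‖ ^ 2 ≤ ‖S‖ * ‖ξ‖ ^ 2 := by
      nlinarith [norm_inner_le_norm (𝕜 := ℂ) ξ (S ξ), S.le_opNorm ξ, norm_nonneg ξ, norm_nonneg (S ξ),
        neg_le_abs ((⟪ξ, S ξ⟫).re)]
    calc ‖Λ ξ‖ = Real.sqrt (‖Λ ξ‖ ^ 2) := by rw [Real.sqrt_sq (norm_nonneg _)]
      _ ≤ Real.sqrt (‖S‖ * ‖ξ‖ ^ 2) := Real.sqrt_le_sqrt h2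
      _ = Real.sqrt ‖S‖ * ‖ξ‖ := by
          rw [Real.sqrt_mul (norm_nonneg S), Real.sqrt_sq (norm_nonneg _)]
  have hΛcont : Continuous Λ := (Λ.mkContinuous (Real.sqrt ‖S‖) hb).continuous
  -- the real-linear map A = l ∘ Λ + Λ ∘ l'
  set Aℝ : L →ₗ[ℝ] L := ((l.restrictScalars ℝ).toLinearMap.comp Λ) +
      (Λ.comp ((l'.restrictScalars ℝ)).toLinearMap) with hAdef
  have hAapp : ∀ η : L, Aℝ η = l (Λ η) + Λ (l' η) := fun η => rfl
  have hAanti : ∀ ξ τ : L, ⟪ξ, Aℝ τ⟫ = -⟪τ, Aℝ ξ⟫ := by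
    intro ξ τ; rw [hAapp, hAapp]; exact hA ξ τ
  have hAsmul : ∀ (c : ℂ) (η : L), Aℝ (c • η) = (starRingEnd ℂ c) • Aℝ η := by
    intro c η
    apply ext_inner_left ℂ
    intro v
    rw [hAanti v (c • η), inner_smul_left, hAanti η v, inner_smul_right]
    ring
  have hAcont : Continuous Aℝ := by
    show Continuous fun η => l (Λ η) + Λ (l' η)
    exact (l.continuous.comp hΛcont).add (hΛcont.comp l'.continuous)
  -- T = A²
  set Tlin : L →ₗ[ℂ] L :=
    { toFun := fun η => Aℝ (Aℝ η)
      map_add' := by intro x y; simp [map_add]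
      map_smul' := by
        intro c η
        simp only [hAsmul, RingHom.id_apply, map_smulₛₗ]
        rw [Complex.conj_conj] } with hTlin
  set T : L →L[ℂ] L := ⟨Tlin, hAcont.comp hAcont⟩ with hTdef
  have hTx : ∀ x : L, T x = Aℝ (Aℝ x) := fun _ => rfl
  have hre := opAbs_re_of_antisq (⇑Aℝ) T hTx hAanti
  have hreS := opAbs_re_of_antisq (⇑Λ) S hSx hΛ
  have hΛsum : Summable fun i => ‖Λ (e i)‖ ^ 2 := by
    simpa only [hreS] using hsum
  -- double-sum argument: Λ ∘ l' is Hilbert–Schmidt w.r.t. e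
  have hGsum : Summable (fun q : ι × ι => ‖⟪e q.2, l (Λ (e q.1))⟫‖ ^ 2) := by
    apply (summable_prod_of_nonneg (fun q => sq_nonneg _)).mpr
    constructor
    · intro j
      exact (parseval' e (l (Λ (e j)))).summable
    · have heq : (fun j => ∑' i, ‖⟪e i, l (Λ (e j))⟫‖ ^ 2) =
          fun j => ‖l (Λ (e j))‖ ^ 2 := funext fun j => (parseval' e _).tsum_eq
      rw [heq]
      apply Summable.of_nonneg_of_le (fun j => sq_nonneg _) (fun j => ?_)
        (hΛsum.mul_left (‖l‖ ^ 2))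
      have := l.le_opNorm (Λ (e j))
      nlinarith [norm_nonneg (Λ (e j)), norm_nonneg (l (Λ (e j))), norm_nonneg l]
  have hswap : ∀ i j : ι, ‖⟪e i, Λ (l' (e j))⟫‖ = ‖⟪e j, l (Λ (e i))⟫‖ := by
    intro i j
    rw [hΛ (e i) (l' (e j)), norm_neg, hl', ContinuousLinearMap.adjoint_inner_left]
  have hFsum : Summable (fun q : ι × ι => ‖⟪e q.2, Λ (l' (e q.1))⟫‖ ^ 2) := by
    have hfe : (fun q : ι × ι => ‖⟪e q.2, Λ (l' (e q.1))⟫‖ ^ 2) =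
        (fun q : ι × ι => ‖⟪e q.2, l (Λ (e q.1))⟫‖ ^ 2) ∘ ⇑(Equiv.prodComm ι ι) := by
      funext q
      simp only [Function.comp_apply, Equiv.prodComm_apply, Prod.fst_swap, Prod.snd_swap]
      rw [hswap q.2 q.1]
    rw [hfe]
    exact ((Equiv.prodComm ι ι).summable_iff).mpr hGsum
  have hvsum : Summable fun i => ‖Λ (l' (e i))‖ ^ 2 := by
    have h1 := ((summable_prod_of_nonneg (fun q => sq_nonneg _)).mp hFsum).2
    have heq : (fun i => ∑' j, ‖⟪e j, Λ (l' (e i))⟫‖ ^ 2) =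
        fun i => ‖Λ (l' (e i))‖ ^ 2 := funext fun i => (parseval' e _).tsum_eq
    rwa [heq] at h1
  have hAsum : Summable fun i => ‖Aℝ (e i)‖ ^ 2 := by
    apply Summable.of_nonneg_of_le (fun i => sq_nonneg _) (fun i => ?_)
      ((hΛsum.mul_left (2 * ‖l‖ ^ 2)).add (hvsum.mul_left 2))
    have b1 : ‖Aℝ (e i)‖ ≤ ‖l‖ * ‖Λ (e i)‖ + ‖Λ (l' (e i))‖ := by
      rw [hAapp]
      exact (norm_add_le _ _).trans (add_le_add (l.le_opNorm _) le_rfl)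
    nlinarith [norm_nonneg (Aℝ (e i)), norm_nonneg (Λ (e i)), norm_nonneg (Λ (l' (e i))),
      norm_nonneg l, sq_nonneg (‖l‖ * ‖Λ (e i)‖ - ‖Λ (l' (e i))‖)]
  refine ⟨T, ?_, ι, e, ?_⟩
  · funext η
    show Aℝ (Aℝ η) = _
    simp only [hAapp]
  · simpa only [hre] using hAsum
end

section
/- Let L be a complex Hilbert space and let Λ, Λ' : L → L be anti-symmetric real-linear maps such that Λ² and Λ'² are trace class. Then the composite Λ'∘Λ is a bounded complex-linear operator, it is trace class, and its Hilbert-space adjoint satisfies (Λ'∘Λ)* = Λ∘Λ'. -/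
open scoped ComplexInnerProductSpace

set_option linter.unusedSectionVars false
set_option maxHeartbeats 1000000
set_option synthInstance.maxHeartbeats 400000

section Aux
variable {L : Type*} [NormedAddCommGroup L] [InnerProductSpace ℂ L] [CompleteSpace L]



theorem antisym_continuous (Λ : L →ₗ[ℝ] L)
    (hΛ : ∀ ξ τ : L, ⟪ξ, Λ τ⟫ = -⟪τ, Λ ξ⟫) : Continuous Λ := by
  apply Λ.continuous_of_isClosed_graph
  have hset : (Λ.graph : Set (L × L)) =
      ⋂ τ : L, {p : L × L | ⟪τ, p.2⟫ + ⟪p.1, Λ τ⟫ = 0} := by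
    ext p
    simp only [Set.mem_iInter, Set.mem_setOf_eq, SetLike.mem_coe, LinearMap.mem_graph_iff]
    constructor
    · rintro h τ
      rw [h, hΛ τ p.1]
      ring
    · intro h
      refine ext_inner_left ℂ fun τ => ?_
      have := h τ
      rw [hΛ τ p.1]
      linear_combination this
  rw [hset]
  refine isClosed_iInter fun τ => ?_
  have : Continuous fun p : L × L => ⟪τ, p.2⟫ + ⟪p.1, Λ τ⟫ :=
    (Continuous.inner continuous_const continuous_snd).add
      (Continuous.inner continuous_fst continuous_const)
  exact isClosed_eq this continuous_const

theorem antisym_conj_smul (Λ : L →ₗ[ℝ] L)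
    (hΛ : ∀ ξ τ : L, ⟪ξ, Λ τ⟫ = -⟪τ, Λ ξ⟫) (c : ℂ) (ξ : L) :
    Λ (c • ξ) = (starRingEnd ℂ) c • Λ ξ := by
  refine ext_inner_left ℂ fun τ => ?_
  rw [hΛ τ (c • ξ), inner_smul_left, hΛ ξ τ, inner_smul_right, hΛ τ ξ]
  ring



/-- The composite of two antisymmetric maps as a continuous `ℂ`-linear map. -/
noncomputable def antisymComp (Λ Λ' : L →ₗ[ℝ] L)
    (hΛ : ∀ ξ τ : L, ⟪ξ, Λ τ⟫ = -⟪τ, Λ ξ⟫)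
    (hΛ' : ∀ ξ τ : L, ⟪ξ, Λ' τ⟫ = -⟪τ, Λ' ξ⟫)
    (hc : Continuous Λ) (hc' : Continuous Λ') : L →L[ℂ] L where
  toFun := fun η => Λ' (Λ η)
  map_add' := by intro x y; simp
  map_smul' := by
    intro c x
    simp only [RingHom.id_apply]
    rw [antisym_conj_smul Λ hΛ, antisym_conj_smul Λ' hΛ']
    simp
  cont := hc'.comp hc

@[simp] theorem antisymComp_apply (Λ Λ' : L →ₗ[ℝ] L) (hΛ hΛ' hc hc') (η : L) :
    antisymComp Λ Λ' hΛ hΛ' hc hc' η = Λ' (Λ η) := rfl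

theorem antisymComp_adjoint (Λ Λ' : L →ₗ[ℝ] L) (hΛ hΛ' hc hc') :
    ContinuousLinearMap.adjoint (antisymComp Λ Λ' hΛ hΛ' hc hc')
      = antisymComp Λ' Λ hΛ' hΛ hc' hc := by
  symm
  rw [ContinuousLinearMap.eq_adjoint_iff]
  intro x y
  rw [antisymComp_apply, antisymComp_apply]
  calc ⟪Λ (Λ' x), y⟫ = (starRingEnd ℂ) ⟪y, Λ (Λ' x)⟫ := (inner_conj_symm _ _).symm
    _ = (starRingEnd ℂ) (-⟪Λ' x, Λ y⟫) := by rw [hΛ y (Λ' x)]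
    _ = -⟪Λ y, Λ' x⟫ := by rw [map_neg, inner_conj_symm]
    _ = ⟪x, Λ' (Λ y)⟫ := (hΛ' x (Λ y)).symm

open ContinuousLinearMap in
theorem abs_bound (T : L →L[ℂ] L) {ε : ℝ} (hε : 0 < ε) :
    ∃ V : L →L[ℂ] L, ‖V‖ ≤ 1 ∧ ∀ ξ : L,
      (⟪ξ, opAbs T ξ⟫).re ≤ (⟪V ξ, T ξ⟫).re + ε * ‖ξ‖ ^ 2 := by
  set A := opAbs T with hAdef
  have hTT : (0 : L →L[ℂ] L) ≤ adjoint T * T := by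
    rw [← star_eq_adjoint]; exact star_mul_self_nonneg T
  have hA0 : (0 : L →L[ℂ] L) ≤ A := CFC.sqrt_nonneg _
  have hAsa : IsSelfAdjoint A := IsSelfAdjoint.of_nonneg hA0
  have hA2 : A * A = adjoint T * T := CFC.sqrt_mul_sqrt_self _ hTT
  have hspec : ∀ t ∈ spectrum ℝ A, (0:ℝ) ≤ t := fun t ht => spectrum_nonneg_of_nonneg hA0 ht
  set g : ℝ → ℝ := fun t => (t + ε)⁻¹ with hgdef
  have hgc : ContinuousOn g (spectrum ℝ A) := by
    apply ContinuousOn.inv₀ (by fun_prop)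
    intro t ht
    have := hspec t ht
    positivity
  set B := cfc g A with hBdef
  have hBsa : IsSelfAdjoint B := cfc_predicate g A
  set V := T ∘L B with hVdef
  have hM : A * B = cfc (fun t : ℝ => t * g t) A := by
    rw [cfc_mul _ _ A (by fun_prop) hgc, cfc_id' ℝ A]
  have hMnorm : ‖A * B‖ ≤ 1 := by
    rw [hM]
    refine norm_cfc_le zero_le_one fun t ht => ?_
    have ht0 := hspec t ht
    rw [Real.norm_eq_abs, abs_of_nonneg (by positivity)]
    rw [mul_inv_le_iff₀ (by positivity)]
    linarith
  have hC : B * (A * A) = cfc (fun t : ℝ => g t * (t * t)) A := by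
    rw [cfc_mul _ _ A hgc (by fun_prop), cfc_mul _ _ A (by fun_prop) (by fun_prop),
      cfc_id' ℝ A]
  have hVnorm : ‖V‖ ≤ 1 := by
    refine opNorm_le_bound _ zero_le_one fun ξ => ?_
    rw [one_mul]
    have h1 : ⟪V ξ, V ξ⟫ = ⟪(A * B) ξ, (A * B) ξ⟫ := by
      calc ⟪V ξ, V ξ⟫ = ⟪T (B ξ), T (B ξ)⟫ := rfl
        _ = ⟪B ξ, (adjoint T * T) (B ξ)⟫ := by
            rw [ContinuousLinearMap.mul_apply, adjoint_inner_right]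
        _ = ⟪B ξ, A (A (B ξ))⟫ := by rw [← hA2]; rfl
        _ = ⟪A (B ξ), A (B ξ)⟫ := by rw [← adjoint_inner_left, hAsa.adjoint_eq]
        _ = ⟪(A * B) ξ, (A * B) ξ⟫ := rfl
    have h2 : ‖V ξ‖ = ‖(A * B) ξ‖ := by
      rw [norm_eq_sqrt_re_inner (𝕜 := ℂ), norm_eq_sqrt_re_inner (𝕜 := ℂ), h1]
    rw [h2]
    calc ‖(A * B) ξ‖ ≤ ‖A * B‖ * ‖ξ‖ := le_opNorm _ _
      _ ≤ 1 * ‖ξ‖ := by gcongr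
      _ = ‖ξ‖ := one_mul _
  refine ⟨V, hVnorm, fun ξ => ?_⟩
  have hkey : ⟪V ξ, T ξ⟫ = ⟪ξ, (B * (A * A)) ξ⟫ := by
    calc ⟪V ξ, T ξ⟫ = ⟪T (B ξ), T ξ⟫ := rfl
      _ = ⟪B ξ, (adjoint T * T) ξ⟫ := by rw [ContinuousLinearMap.mul_apply, adjoint_inner_right]
      _ = ⟪B ξ, (A * A) ξ⟫ := by rw [hA2]
      _ = ⟪ξ, B ((A * A) ξ)⟫ := by rw [← ContinuousLinearMap.adjoint_inner_left B ((A * A) ξ) ξ, hBsa.adjoint_eq]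
      _ = ⟪ξ, (B * (A * A)) ξ⟫ := rfl
  have hmono : cfc (fun t : ℝ => t - ε) A ≤ cfc (fun t : ℝ => g t * (t * t)) A := by
    refine cfc_mono fun t ht => ?_
    have ht0 := hspec t ht
    have htε : (0:ℝ) < t + ε := by linarith
    show t - ε ≤ (t + ε)⁻¹ * (t * t)
    rw [← sub_nonneg]
    have heq : (t + ε)⁻¹ * (t * t) - (t - ε) = (t + ε)⁻¹ * (ε * ε) := by
      field_simp
      ring
    rw [heq]
    positivity
  have hsub : cfc (fun t : ℝ => t - ε) A = A - (ε : ℝ) • 1 := by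
    have h : (fun t : ℝ => t - ε) = fun t : ℝ => (id t : ℝ) - (fun _ : ℝ => ε) t := rfl
    rw [h, cfc_sub _ _ A, cfc_id ℝ A, cfc_const ε A, Algebra.algebraMap_eq_smul_one]
  rw [hsub] at hmono
  rw [← hC] at hmono
  have hq := (Complex.nonneg_iff.mp (((le_def _ _).mp hmono).inner_nonneg_right ξ)).1
  simp only [ContinuousLinearMap.sub_apply, inner_sub_right, map_sub, RCLike.re_to_complex, Complex.sub_re,
    ContinuousLinearMap.smul_apply, ContinuousLinearMap.one_apply,
    RCLike.real_smul_eq_coe_smul (K := ℂ), inner_smul_right,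
    Complex.mul_re] at hq
  rw [hkey]
  have h5 : (⟪ξ, ξ⟫).re = ‖ξ‖ ^ 2 := by
    rw [@inner_self_eq_norm_sq_to_K ℂ]
    norm_cast
  have h6 : (⟪ξ, ξ⟫).im = 0 := by
    rw [@inner_self_eq_norm_sq_to_K ℂ]
    norm_cast
  rw [h5, h6] at hq
  norm_num at hq
  simp only [ContinuousLinearMap.mul_apply]
  linarith



theorem re_inner_self (x : L) : ((⟪x, x⟫ : ℂ)).re = ‖x‖ ^ 2 := by
  have := @inner_self_eq_norm_sq (𝕜 := ℂ) _ _ _ _ x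
  simpa [RCLike.re_to_complex] using this

open ContinuousLinearMap in
theorem antisymSq (Λ : L →ₗ[ℝ] L)
    (hΛ : ∀ ξ τ : L, ⟪ξ, Λ τ⟫ = -⟪τ, Λ ξ⟫) (S : L →L[ℂ] L)
    (hS : ⇑S = fun η => Λ (Λ η)) :
    ∀ x, (⟪x, opAbs S x⟫).re = ‖Λ x‖ ^ 2 := by
  have happ : ∀ x, S x = Λ (Λ x) := fun x => congrFun hS x
  have hinner : ∀ x y : L, ⟪S x, y⟫ = ⟪x, S y⟫ := by
    intro x y
    rw [happ, happ]
    calc ⟪Λ (Λ x), y⟫ = (starRingEnd ℂ) ⟪y, Λ (Λ x)⟫ := (inner_conj_symm _ _).symm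
      _ = (starRingEnd ℂ) (-⟪Λ x, Λ y⟫) := by rw [hΛ y (Λ x)]
      _ = -⟪Λ y, Λ x⟫ := by rw [map_neg, inner_conj_symm]
      _ = ⟪x, Λ (Λ y)⟫ := (hΛ x (Λ y)).symm
  have hsa : IsSelfAdjoint S := by
    rw [ContinuousLinearMap.isSelfAdjoint_iff']
    exact ((ContinuousLinearMap.eq_adjoint_iff S S).mpr hinner).symm
  have hval : ∀ x : L, ⟪x, (-S) x⟫ = ⟪Λ x, Λ x⟫ := by
    intro x
    rw [ContinuousLinearMap.neg_apply, inner_neg_right, happ, hΛ x (Λ x), neg_neg]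
  have hneg : (0 : L →L[ℂ] L) ≤ -S := by
    rw [ContinuousLinearMap.nonneg_iff_isPositive]
    refine ⟨hsa.neg.isSymmetric, fun x => ?_⟩
    have : (0:ℝ) ≤ ((⟪x, (-S) x⟫ : ℂ)).re := by
      rw [hval x, re_inner_self]
      positivity
    rw [ContinuousLinearMap.reApplyInnerSelf]
    rw [← inner_re_symm]
    exact this
  have habs : opAbs S = -S := by
    rw [opAbs, ← star_eq_adjoint, hsa.star_eq, show S * S = -S * -S by rw [neg_mul_neg],
      CFC.sqrt_mul_self _ hneg]
  intro x
  rw [habs, hval x, re_inner_self]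

theorem parseval {κ : Type} (f : HilbertBasis κ ℂ L) (η : L) :
    HasSum (fun j => ‖(⟪f j, η⟫ : ℂ)‖ ^ 2) (‖η‖ ^ 2) := by
  have h := Complex.hasSum_re (f.hasSum_inner_mul_inner η η)
  have h1 : ∀ j, ((⟪η, f j⟫ : ℂ) * ⟪f j, η⟫).re = ‖(⟪f j, η⟫ : ℂ)‖ ^ 2 := by
    intro j
    rw [← inner_conj_symm η (f j), mul_comm, Complex.mul_conj, Complex.ofReal_re,
      Complex.normSq_eq_norm_sq]
  have h2 : ((⟪η, η⟫ : ℂ)).re = ‖η‖ ^ 2 := re_inner_self η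
  rw [h2] at h
  have h3 : (fun j => ((⟪η, f j⟫ : ℂ) * ⟪f j, η⟫).re) = fun j => ‖(⟪f j, η⟫ : ℂ)‖ ^ 2 :=
    funext h1
  rwa [h3] at h


open ContinuousLinearMap in
theorem hs_transfer (Λ' : L →ₗ[ℝ] L)
    (hΛ' : ∀ ξ τ : L, ⟪ξ, Λ' τ⟫ = -⟪τ, Λ' ξ⟫)
    {κ : Type} (f : HilbertBasis κ ℂ L)
    (hsum : Summable fun j => ‖Λ' (f j)‖ ^ 2)
    (V : L →L[ℂ] L) (hV : ‖V‖ ≤ 1)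
    {ι : Type} (e : HilbertBasis ι ℂ L) (F : Finset ι) :
    ∑ i ∈ F, ‖Λ' (V (e i))‖ ^ 2 ≤ ∑' j, ‖Λ' (f j)‖ ^ 2 := by
  have hterm : ∀ j : κ, ∀ i : ι,
      ‖(⟪f j, Λ' (V (e i))⟫ : ℂ)‖ ^ 2 = ‖(⟪e i, adjoint V (Λ' (f j))⟫ : ℂ)‖ ^ 2 := by
    intro j i
    rw [hΛ' (f j) (V (e i)), norm_neg]
    rw [show (⟪V (e i), Λ' (f j)⟫ : ℂ) = ⟪e i, adjoint V (Λ' (f j))⟫ by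
      rw [adjoint_inner_right]]
  have hbessel : ∀ j : κ, ∑ i ∈ F, ‖(⟪f j, Λ' (V (e i))⟫ : ℂ)‖ ^ 2 ≤ ‖Λ' (f j)‖ ^ 2 := by
    intro j
    calc ∑ i ∈ F, ‖(⟪f j, Λ' (V (e i))⟫ : ℂ)‖ ^ 2
        = ∑ i ∈ F, ‖(⟪e i, adjoint V (Λ' (f j))⟫ : ℂ)‖ ^ 2 := by
          exact Finset.sum_congr rfl fun i _ => hterm j i
      _ ≤ ‖adjoint V (Λ' (f j))‖ ^ 2 := e.orthonormal.sum_inner_products_le _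
      _ ≤ (‖V‖ * ‖Λ' (f j)‖) ^ 2 := by
          have h1 : ‖adjoint V (Λ' (f j))‖ ≤ ‖adjoint V‖ * ‖Λ' (f j)‖ := le_opNorm _ _
          have h2 : ‖adjoint V‖ = ‖V‖ := by
            rw [← star_eq_adjoint]; exact norm_star V
          rw [h2] at h1
          exact pow_le_pow_left₀ (norm_nonneg _) h1 2
      _ ≤ ‖Λ' (f j)‖ ^ 2 := by
          have : ‖V‖ * ‖Λ' (f j)‖ ≤ 1 * ‖Λ' (f j)‖ := by gcongr
          rw [one_mul] at this
          exact pow_le_pow_left₀ (by positivity) this 2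
  calc ∑ i ∈ F, ‖Λ' (V (e i))‖ ^ 2
      = ∑ i ∈ F, ∑' j, ‖(⟪f j, Λ' (V (e i))⟫ : ℂ)‖ ^ 2 := by
        refine Finset.sum_congr rfl fun i _ => ?_
        rw [(parseval f (Λ' (V (e i)))).tsum_eq]
    _ = ∑' j, ∑ i ∈ F, ‖(⟪f j, Λ' (V (e i))⟫ : ℂ)‖ ^ 2 := by
        rw [Summable.tsum_finsetSum fun i _ => (parseval f (Λ' (V (e i)))).summable]
    _ ≤ ∑' j, ‖Λ' (f j)‖ ^ 2 := by
        refine Summable.tsum_le_tsum hbessel ?_ hsum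
        refine Summable.of_nonneg_of_le (fun j => ?_) hbessel hsum
        exact Finset.sum_nonneg fun i _ => by positivity

end Aux

open ContinuousLinearMap in
/-- If `Λ, Λ'` are anti-symmetric with `Λ², Λ'²` trace class, then `Λ'∘Λ`
is a bounded complex-linear operator which is trace class, and `(Λ'∘Λ)* = Λ∘Λ'`. -/
theorem antisymmetric_comp_traceClass_adjoint
    {L : Type*} [NormedAddCommGroup L] [InnerProductSpace ℂ L] [CompleteSpace L]
    (Λ Λ' : L →ₗ[ℝ] L)
    (hΛ : ∀ ξ τ : L, ⟪ξ, Λ τ⟫ = -⟪τ, Λ ξ⟫)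
    (hΛ' : ∀ ξ τ : L, ⟪ξ, Λ' τ⟫ = -⟪τ, Λ' ξ⟫)
    (h2 : IsTraceClassFun (fun η => Λ (Λ η)))
    (h2' : IsTraceClassFun (fun η => Λ' (Λ' η))) :
    ∃ T : L →L[ℂ] L, ⇑T = (fun η => Λ' (Λ η)) ∧ IsTraceClassOp T ∧
      ⇑(ContinuousLinearMap.adjoint T) = (fun η => Λ (Λ' η)) := by
  obtain ⟨S, hS, ι, e, hSsum⟩ := h2
  obtain ⟨S', hS', κ, f, hS'sum⟩ := h2'
  have hsum : Summable fun i => ‖Λ (e i)‖ ^ 2 :=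
    hSsum.congr fun i => antisymSq Λ hΛ S hS (e i)
  have hsum' : Summable fun j => ‖Λ' (f j)‖ ^ 2 :=
    hS'sum.congr fun j => antisymSq Λ' hΛ' S' hS' (f j)
  have hcont := antisym_continuous Λ hΛ
  have hcont' := antisym_continuous Λ' hΛ'
  refine ⟨antisymComp Λ Λ' hΛ hΛ' hcont hcont', rfl, ?_, ?_⟩
  · set T := antisymComp Λ Λ' hΛ hΛ' hcont hcont' with hT
    refine ⟨ι, e, ?_⟩
    set C := ∑' i, ‖Λ (e i)‖ ^ 2 with hC
    set C' := ∑' j, ‖Λ' (f j)‖ ^ 2 with hC'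
    have hnn : ∀ i, 0 ≤ ((⟪e i, opAbs T (e i)⟫ : ℂ)).re := by
      intro i
      have h0 : (0 : L →L[ℂ] L) ≤ opAbs T := CFC.sqrt_nonneg _
      have := ((ContinuousLinearMap.nonneg_iff_isPositive _).mp h0).inner_nonneg_right (e i)
      exact (Complex.nonneg_iff.mp this).1
    refine summable_of_sum_le (c := C / 2 + C' / 2) hnn ?_
    intro F
    refine le_of_forall_pos_le_add fun δ hδ => ?_
    have hε : (0:ℝ) < δ / (F.card + 1) := by positivity
    obtain ⟨V, hV, hVb⟩ := abs_bound T hε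
    have hstep : ∀ i ∈ F, ((⟪e i, opAbs T (e i)⟫ : ℂ)).re ≤
        ‖Λ (e i)‖ ^ 2 / 2 + ‖Λ' (V (e i))‖ ^ 2 / 2 + δ / (F.card + 1) := by
      intro i _
      have h1 := hVb (e i)
      have hnorm1 : ‖e i‖ = 1 := e.orthonormal.1 i
      rw [hnorm1, one_pow, mul_one] at h1
      have h2 : ((⟪V (e i), T (e i)⟫ : ℂ)).re ≤ ‖Λ (e i)‖ * ‖Λ' (V (e i))‖ := by
        have happ : T (e i) = Λ' (Λ (e i)) := rfl
        rw [happ, hΛ' (V (e i)) (Λ (e i))]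
        calc ((-⟪Λ (e i), Λ' (V (e i))⟫ : ℂ)).re
            ≤ ‖(-⟪Λ (e i), Λ' (V (e i))⟫ : ℂ)‖ := by
              exact Complex.re_le_norm _
          _ = ‖(⟪Λ (e i), Λ' (V (e i))⟫ : ℂ)‖ := norm_neg _
          _ ≤ ‖Λ (e i)‖ * ‖Λ' (V (e i))‖ := norm_inner_le_norm _ _
      nlinarith [sq_nonneg (‖Λ (e i)‖ - ‖Λ' (V (e i))‖)]
    have hb1 : ∑ i ∈ F, ‖Λ (e i)‖ ^ 2 ≤ C := Summable.sum_le_tsum F (fun i _ => by positivity) hsum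
    have hb2 : ∑ i ∈ F, ‖Λ' (V (e i))‖ ^ 2 ≤ C' := hs_transfer Λ' hΛ' f hsum' V hV e F
    have hb3 : (F.card : ℝ) * (δ / (F.card + 1)) ≤ δ := by
      calc (F.card : ℝ) * (δ / (F.card + 1)) = δ * ((F.card : ℝ) / (F.card + 1)) := by ring
        _ ≤ δ * 1 := by
            have hpos : (0:ℝ) < (F.card : ℝ) + 1 := by positivity
            have : ((F.card : ℝ)) / (F.card + 1) ≤ 1 := by
              rw [div_le_one hpos]; linarith
            exact mul_le_mul_of_nonneg_left this (le_of_lt hδ)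
        _ = δ := mul_one δ
    calc ∑ i ∈ F, ((⟪e i, opAbs T (e i)⟫ : ℂ)).re
        ≤ ∑ i ∈ F, (‖Λ (e i)‖ ^ 2 / 2 + ‖Λ' (V (e i))‖ ^ 2 / 2 + δ / (F.card + 1)) :=
          Finset.sum_le_sum hstep
      _ = (∑ i ∈ F, ‖Λ (e i)‖ ^ 2) / 2 + (∑ i ∈ F, ‖Λ' (V (e i))‖ ^ 2) / 2
            + F.card * (δ / (F.card + 1)) := by
          rw [Finset.sum_add_distrib, Finset.sum_add_distrib, Finset.sum_const,
            nsmul_eq_mul, Finset.sum_div, Finset.sum_div]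
      _ ≤ C / 2 + C' / 2 + δ := by
          have := hb1
          have := hb2
          linarith
  · rw [antisymComp_adjoint]
    rfl
end
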